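/- Let q0, q1, q2 ∈ ℝ[u] have degree at most m ≥ 1, define the symmetric m×m matrix pencil F(x1,x2) = B_m(q1 − x1·q0, q2 − x2·q0), and let p(x1,x2) = det F(x1,x2), a bivariate real polynomial. Then p vanishes at every point of the rationally parametrized curve: for every u ∈ ℝ with q0(u) ≠ 0, p(q1(u)/q0(u), q2(u)/q0(u)) = 0. -/

import Mathlib

/-- The Bézout matrix `B_m(g,h)` of two univariate polynomials of degree at most `m`:
the `m × m` symmetric matrix `(b_{kl})` determined by
`g(u)h(v) − g(v)h(u) = (u − v) ∑_{k,l=0}^{m−1} b_{kl} u^k v^l`. Working in `R[v][u]`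
(outer variable `u`, inner variable `v`), `u − v` is the monic polynomial `X − C X`, and
`b_{kl}` is the coefficient of `u^k v^l` of the exact quotient. -/
noncomputable def bezoutMatrix (R : Type*) [CommRing R] (m : ℕ) (g h : Polynomial R) :
    Matrix (Fin m) (Fin m) R :=
  Matrix.of fun k l : Fin m =>
    (((g.map (Polynomial.C : R →+* Polynomial R) * Polynomial.C h -
        Polynomial.C g * h.map (Polynomial.C : R →+* Polynomial R)) /ₘ
      (Polynomial.X - Polynomial.C Polynomial.X)).coeff (k : ℕ)).coeff (l : ℕ)

open Polynomial

/-- Let `q0, q1, q2 ∈ ℝ[u]` have degree at most `m ≥ 1`, define the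
symmetric pencil `F(x1,x2) = B_m(q1 − x1 q0, q2 − x2 q0)` and `p = det F`. Then `p`
vanishes at every point of the rationally parametrized curve: for every `u ∈ ℝ` with
`q0(u) ≠ 0`, `p (q1(u)/q0(u), q2(u)/q0(u)) = 0`. -/
theorem stmt11 (m : ℕ) (hm : 1 ≤ m) (q0 q1 q2 : Polynomial ℝ)
    (hq0 : q0.degree ≤ m) (hq1 : q1.degree ≤ m) (hq2 : q2.degree ≤ m)
    (F : ℝ → ℝ → Matrix (Fin m) (Fin m) ℝ)
    (hF : ∀ x1 x2 : ℝ, F x1 x2 = bezoutMatrix ℝ m (q1 - x1 • q0) (q2 - x2 • q0))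
    (p : ℝ → ℝ → ℝ) (hp : ∀ x1 x2 : ℝ, p x1 x2 = (F x1 x2).det) :
    ∀ u : ℝ, q0.eval u ≠ 0 →
      p (q1.eval u / q0.eval u) (q2.eval u / q0.eval u) = 0 := by
  intro u hu
  set x1 : ℝ := q1.eval u / q0.eval u with hx1
  set x2 : ℝ := q2.eval u / q0.eval u with hx2
  set g : ℝ[X] := q1 - x1 • q0 with hg
  set h : ℝ[X] := q2 - x2 • q0 with hh
  have hg0 : g.eval u = 0 := by
    simp only [hg, eval_sub, eval_smul, smul_eq_mul, hx1]
    field_simp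
    ring
  have hh0 : h.eval u = 0 := by
    simp only [hh, eval_sub, eval_smul, smul_eq_mul, hx2]
    field_simp
    ring
  set D : (ℝ[X])[X] := g.map (C : ℝ →+* ℝ[X]) * C h - C g * h.map (C : ℝ →+* ℝ[X]) with hD
  set d : (ℝ[X])[X] := X - C (X : ℝ[X]) with hd
  have hdm : d.Monic := monic_X_sub_C _
  have hdvd : d ∣ D := by
    rw [hd, dvd_iff_isRoot]
    simp [IsRoot, hD, eval_map, eval₂_C_X]
  set Q : (ℝ[X])[X] := D /ₘ d with hQ
  have hDQ : D = d * Q := by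
    have := modByMonic_add_div D d
    rw [(modByMonic_eq_zero_iff_dvd hdm).2 hdvd, zero_add] at this
    exact this.symm
  -- degree of Q
  have hgdeg : g.degree ≤ m := le_trans (degree_sub_le _ _) (by
    simp only [max_le_iff]
    exact ⟨hq1, le_trans (degree_smul_le _ _) hq0⟩)
  have hhdeg : h.degree ≤ m := le_trans (degree_sub_le _ _) (by
    simp only [max_le_iff]
    exact ⟨hq2, le_trans (degree_smul_le _ _) hq0⟩)
  have hDdeg : D.degree ≤ m := by
    refine le_trans (degree_sub_le _ _) ?_
    simp only [max_le_iff]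
    constructor
    · refine le_trans (degree_mul_le _ _) ?_
      calc (g.map (C : ℝ →+* ℝ[X])).degree + (C h).degree
          ≤ (m : WithBot ℕ) + 0 := add_le_add (le_trans (degree_map_le) hgdeg) degree_C_le
        _ = m := by simp
    · refine le_trans (degree_mul_le _ _) ?_
      calc (C g).degree + (h.map (C : ℝ →+* ℝ[X])).degree
          ≤ (0 : WithBot ℕ) + m := add_le_add degree_C_le (le_trans (degree_map_le) hhdeg)
        _ = m := by simp
  have hQdeg : Q.natDegree < m := by
    rw [hQ, natDegree_divByMonic D hdm]
    have : D.natDegree ≤ m := natDegree_le_iff_degree_le.2 hDdeg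
    have hdnd : d.natDegree = 1 := by rw [hd]; exact natDegree_X_sub_C _
    omega
  -- evaluation at C u
  have hDeval : D.eval (C u) = 0 := by
    simp only [hD, eval_sub, eval_mul, eval_C, eval_map, eval₂_hom, hg0, hh0, map_zero,
      zero_mul, mul_zero, sub_zero]
  have hQeval : Q.eval (C u) = 0 := by
    have hne : (C u - X : ℝ[X]) ≠ 0 := by
      intro hc
      have := X_sub_C_ne_zero u
      rw [← neg_sub] at hc
      exact this (neg_eq_zero.mp hc)
    have : (C u - X) * Q.eval (C u) = 0 := by
      have := congrArg (Polynomial.eval (C u : ℝ[X])) hDQ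
      rw [hDeval, eval_mul] at this
      simpa [hd] using this.symm
    exact (mul_eq_zero.mp this).resolve_left hne
  -- coefficient identity
  have key : ∀ l : ℕ, ∑ k ∈ Finset.range m, (Q.coeff k).coeff l * u ^ k = 0 := by
    intro l
    have := congrArg (fun q : ℝ[X] => q.coeff l) hQeval
    rw [eval_eq_sum_range' hQdeg] at this
    simp only [finset_sum_coeff, ← C_pow, coeff_mul_C, coeff_zero] at this
    exact this
  -- kernel vector
  set w : Fin m → ℝ := fun k => u ^ (k : ℕ) with hw
  have hwM : Matrix.vecMul w (F x1 x2) = 0 := by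
    funext l
    rw [hF]
    simp only [Matrix.vecMul, dotProduct, hw, bezoutMatrix, Matrix.of_apply]
    rw [Fin.sum_univ_eq_sum_range (fun k => u ^ k * ((((q1 - x1 • q0).map (C : ℝ →+* ℝ[X]) * C (q2 - x2 • q0) - C (q1 - x1 • q0) * (q2 - x2 • q0).map (C : ℝ →+* ℝ[X])) /ₘ (X - C X)).coeff k).coeff (l : ℕ))]
    have := key l
    simp only [Pi.zero_apply]
    rw [← this]
    apply Finset.sum_congr rfl
    intro k _
    rw [mul_comm]
  have hwne : w ≠ 0 := by
    intro hc
    have := congrFun hc ⟨0, hm⟩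
    simp [hw] at this
  rw [hp]
  exact Matrix.exists_vecMul_eq_zero_iff.mp ⟨w, hwne, hwM⟩
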